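/- Let n ≥ 1 and let F : ℕ̄ⁿ → ℕ̄ⁿ_↗ be the partial-sums map F(m) = (m_1, m_1+m_2, …, m_1+⋯+m_n) (sums in ℕ̄, with +∞ absorbing). Then for all m, m' ∈ ℕ̄ⁿ one has F(m) = F(m') if and only if (m, m') ∈ R_∞, i.e. if and only if ε(m) = ε(m') and m_i = m'_i for all i < ε(m). -/

import Mathlib

/-! Tuples in `ℕ̄ⁿ = (ℕ∞)ⁿ` (here `Fin n → ℕ∞`), their anchor and index (`0`-based: the
paper's `ε(m)` resp. `ι(m)`, with values in `{1, …, n+1}`, equals `anchor n m + 1` resp.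
`indexv n m + 1`), partial sums, and the equivalence relation `R_∞`. -/

/-- The (`0`-based) *anchor* of `m ∈ ℕ̄ⁿ`: the least `i` with `m i = ⊤`, and `n` if there is
no such `i` (the convention `m_{n+1} := +∞` of the paper). -/
noncomputable def anchor (n : ℕ) (m : Fin n → ℕ∞) : ℕ :=
  sInf {i : ℕ | n ≤ i ∨ ∃ h : i < n, m ⟨i, h⟩ = ⊤}

/-- The (`0`-based) *index* of `m ∈ ℕ̄ⁿ`: the least `i` with `m i ≠ 0`, and `n` if there is
no such `i` (the convention `m_{n+1} := +∞` of the paper). -/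
noncomputable def indexv (n : ℕ) (m : Fin n → ℕ∞) : ℕ :=
  sInf {i : ℕ | n ≤ i ∨ ∃ h : i < n, m ⟨i, h⟩ ≠ 0}

/-- The partial-sums map `ℕ̄ⁿ → ℕ̄ⁿ`, `m ↦ (m₁, m₁+m₂, …, m₁+⋯+m_n)` (`+∞` absorbing). -/
def psumE {n : ℕ} (m : Fin n → ℕ∞) : Fin n → ℕ∞ :=
  fun i => ∑ j ∈ Finset.Iic i, m j

/-- The partial-sums map `ℤⁿ → ℤⁿ`, `k ↦ (k₁, k₁+k₂, …, k₁+⋯+k_n)`. -/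
def psumZ {n : ℕ} (k : Fin n → ℤ) : Fin n → ℤ :=
  fun i => ∑ j ∈ Finset.Iic i, k j

/-- The equivalence relation `R_∞` on `ℕ̄ⁿ`: `(m, m') ∈ R_∞` iff `ε(m) = ε(m')` and
`mᵢ = m'ᵢ` for all `i < ε(m)`. -/
def Rinf (n : ℕ) (m m' : Fin n → ℕ∞) : Prop :=
  anchor n m = anchor n m' ∧ ∀ i : Fin n, (i : ℕ) < anchor n m → m i = m' i

/-- The sum `k + m ∈ ℕ̄` of `k : ℤ` and `m : ℕ̄` (with `k + ∞ = ∞`; for finite `m` the value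
is clamped to `0` when `m + k < 0`, which is immaterial under the condition `m + k ≥ 0`). -/
def addZE (k : ℤ) (m : ℕ∞) : ℕ∞ :=
  if m = ⊤ then ⊤ else ((((m.toNat : ℤ) + k).toNat : ℕ) : ℕ∞)

/-- The componentwise sum `k + m ∈ ℕ̄ⁿ` of `k : ℤⁿ` and `m : ℕ̄ⁿ`. -/
def addZv {n : ℕ} (k : Fin n → ℤ) (m : Fin n → ℕ∞) : Fin n → ℕ∞ :=
  fun i => addZE (k i) (m i)

/-- The condition `k + m ∈ ℕ̄ⁿ`: every component of the sum is `+∞` or a nonnegative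
integer. -/
def okAdd {n : ℕ} (k : Fin n → ℤ) (m : Fin n → ℕ∞) : Prop :=
  ∀ i : Fin n, m i = ⊤ ∨ 0 ≤ ((m i).toNat : ℤ) + k i

/-- For `n ≥ 1`, the partial-sums map `F : ℕ̄ⁿ → ℕ̄ⁿ_↗` takes values in the
increasing tuples, and `F(m) = F(m')` if and only if `(m, m') ∈ R_∞`, i.e. iff
`ε(m) = ε(m')` and `mᵢ = m'ᵢ` for all `i < ε(m)`. -/
private lemma anchor_le (n : ℕ) (m : Fin n → ℕ∞) : anchor n m ≤ n :=
  Nat.sInf_le (Or.inl le_rfl)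

private lemma anchor_top {n : ℕ} {m : Fin n → ℕ∞} (h : anchor n m < n) :
    m ⟨anchor n m, h⟩ = ⊤ := by
  have hmem := Nat.sInf_mem (s := {i : ℕ | n ≤ i ∨ ∃ h : i < n, m ⟨i, h⟩ = ⊤})
    ⟨n, Or.inl le_rfl⟩
  rcases hmem with h' | ⟨h', e⟩
  · exact absurd h (not_lt.2 h')
  · exact e

private lemma ne_top_of_lt_anchor {n : ℕ} {m : Fin n → ℕ∞} {i : Fin n}
    (h : (i : ℕ) < anchor n m) : m i ≠ ⊤ := by
  intro e
  have : (i : ℕ) ∈ {i : ℕ | n ≤ i ∨ ∃ h : i < n, m ⟨i, h⟩ = ⊤} :=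
    Or.inr ⟨i.2, by simpa using e⟩
  exact absurd (Nat.sInf_le this) (not_le.2 h)

private lemma psumE_top_iff {n : ℕ} (m : Fin n → ℕ∞) (i : Fin n) :
    psumE m i = ⊤ ↔ anchor n m ≤ (i : ℕ) := by
  constructor
  · intro h
    by_contra hlt
    push_neg at hlt
    refine absurd h (WithTop.sum_ne_top.2 fun j hj => ne_top_of_lt_anchor ?_)
    exact lt_of_le_of_lt (by exact_mod_cast Finset.mem_Iic.1 hj) hlt
  · intro h
    have hlt : anchor n m < n := lt_of_le_of_lt h i.2
    have hj : (⟨anchor n m, hlt⟩ : Fin n) ∈ Finset.Iic i := Finset.mem_Iic.2 (by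
      exact Fin.mk_le_of_le_val h)
    have := Finset.single_le_sum (f := m) (fun j _ => zero_le) hj
    rw [anchor_top hlt] at this
    exact top_le_iff.1 this

theorem stmt_9 (n : ℕ) (hn : 1 ≤ n) :
    (∀ m : Fin n → ℕ∞, Monotone (psumE m)) ∧
    (∀ m m' : Fin n → ℕ∞, psumE m = psumE m' ↔ Rinf n m m') := by
  constructor
  · intro m i j hij
    exact Finset.sum_le_sum_of_subset (Finset.Iic_subset_Iic.2 hij)
  · intro m m'
    constructor
    · intro heq
      have hanch : anchor n m = anchor n m' := by
        by_contra hne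
        rcases lt_or_gt_of_ne hne with h | h
        · have hlt : anchor n m < n := lt_of_lt_of_le h (anchor_le n m')
          have i : Fin n := ⟨anchor n m, hlt⟩
          have h1 : psumE m ⟨anchor n m, hlt⟩ = ⊤ :=
            (psumE_top_iff m _).2 le_rfl
          have h2 : psumE m' ⟨anchor n m, hlt⟩ ≠ ⊤ := fun e =>
            absurd ((psumE_top_iff m' _).1 e) (not_le.2 h)
          exact h2 (heq ▸ h1)
        · have hlt : anchor n m' < n := lt_of_lt_of_le h (anchor_le n m)
          have h1 : psumE m' ⟨anchor n m', hlt⟩ = ⊤ :=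
            (psumE_top_iff m' _).2 le_rfl
          have h2 : psumE m ⟨anchor n m', hlt⟩ ≠ ⊤ := fun e =>
            absurd ((psumE_top_iff m _).1 e) (not_le.2 h)
          exact h2 (heq ▸ h1)
      refine ⟨hanch, ?_⟩
      have key : ∀ N : ℕ, ∀ i : Fin n, (i : ℕ) = N → (i : ℕ) < anchor n m → m i = m' i := by
        intro N
        induction N using Nat.strong_induction_on with
        | _ N ih =>
          intro i hiN hia
          have hsum : ∑ j ∈ Finset.Iio i, m j = ∑ j ∈ Finset.Iio i, m' j :=
            Finset.sum_congr rfl fun j hj => by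
              have hji : (j : ℕ) < (i : ℕ) := Fin.lt_def.1 (Finset.mem_Iio.1 hj)
              exact ih j (hiN ▸ hji) j rfl (lt_trans hji hia)
          have hIic : psumE m i = m i + ∑ j ∈ Finset.Iio i, m j := by
            rw [psumE, ← Finset.Iio_insert, Finset.sum_insert (by simp)]
          have hIic' : psumE m' i = m' i + ∑ j ∈ Finset.Iio i, m' j := by
            rw [psumE, ← Finset.Iio_insert, Finset.sum_insert (by simp)]
          have hne : (∑ j ∈ Finset.Iio i, m j) ≠ ⊤ :=
            WithTop.sum_ne_top.2 fun j hj =>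
              ne_top_of_lt_anchor (lt_trans (Fin.lt_def.1 (Finset.mem_Iio.1 hj)) hia)
          have : m i + ∑ j ∈ Finset.Iio i, m j = m' i + ∑ j ∈ Finset.Iio i, m j := by
            rw [← hIic, heq, hIic', hsum]
          exact WithTop.add_right_cancel hne this
      exact fun i hi => key (i : ℕ) i rfl hi
    · rintro ⟨hanch, hent⟩
      funext i
      by_cases hi : (i : ℕ) < anchor n m
      · exact Finset.sum_congr rfl fun j hj =>
          hent j (lt_of_le_of_lt (by exact_mod_cast Finset.mem_Iic.1 hj) hi)
      · push_neg at hi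
        rw [(psumE_top_iff m i).2 hi, ((psumE_top_iff m' i).2 (hanch ▸ hi)).symm]
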